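/- Let R be a ring and M a right R-module which is either finitely generated projective, or finitely generated semisimple. Then for every anti-endomorphism α of End_R(M), the form b_α is right regular. -/

import Mathlib

open MulOpposite TensorProduct Function

universe u v w v'

section Core

/-- An anti-endomorphism of a ring: additive, unital, reverses multiplication. -/
def IsAntiEndo {W : Type*} [Ring W] (α : W → W) : Prop :=
  (∀ u v : W, α (u + v) = α u + α v) ∧ α 1 = 1 ∧ ∀ u v : W, α (u * v) = α v * α u

/-- An anti-automorphism of a ring: a bijective anti-endomorphism. -/
def IsAntiAuto {W : Type*} [Ring W] (α : W → W) : Prop :=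
  IsAntiEndo α ∧ Function.Bijective α

/-- An inner automorphism of a ring: conjugation by a unit. -/
def IsInnerAut {W : Type*} [Ring W] (φ : W → W) : Prop :=
  ∃ u : Wˣ, ∀ w : W, φ w = ↑u * w * ↑u⁻¹

variable (R : Type u) [Ring R]

/-- A double `R`-module structure on the additive group `K`: two commuting
right `R`-module structures `m0` and `m1`. -/
structure DoubleModule (K : Type v) [AddCommGroup K] where
  m0 : K → R → K
  m1 : K → R → K
  m0_add_left : ∀ (k k' : K) (r : R), m0 (k + k') r = m0 k r + m0 k' r
  m0_add_right : ∀ (k : K) (r r' : R), m0 k (r + r') = m0 k r + m0 k r'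
  m0_mul : ∀ (k : K) (r r' : R), m0 k (r * r') = m0 (m0 k r) r'
  m0_one : ∀ k : K, m0 k 1 = k
  m1_add_left : ∀ (k k' : K) (r : R), m1 (k + k') r = m1 k r + m1 k' r
  m1_add_right : ∀ (k : K) (r r' : R), m1 k (r + r') = m1 k r + m1 k r'
  m1_mul : ∀ (k : K) (r r' : R), m1 k (r * r') = m1 (m1 k r) r'
  m1_one : ∀ k : K, m1 k 1 = k
  comm : ∀ (k : K) (a b : R), m1 (m0 k a) b = m0 (m1 k b) a

variable {R}

/-- A homomorphism of double `R`-modules. -/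
def IsDoubleHom {K : Type v} {K' : Type w} [AddCommGroup K] [AddCommGroup K']
    (DK : DoubleModule R K) (DK' : DoubleModule R K') (f : K → K') : Prop :=
  (∀ k k' : K, f (k + k') = f k + f k') ∧
  (∀ (k : K) (r : R), f (DK.m0 k r) = DK'.m0 (f k) r) ∧
  (∀ (k : K) (r : R), f (DK.m1 k r) = DK'.m1 (f k) r)

/-- An isomorphism of double `R`-modules. -/
def IsDoubleIso {K : Type v} {K' : Type w} [AddCommGroup K] [AddCommGroup K']
    (DK : DoubleModule R K) (DK' : DoubleModule R K') (f : K → K') : Prop :=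
  IsDoubleHom DK DK' f ∧ Function.Bijective f

/-- An anti-automorphism of a double `R`-module: an additive bijection exchanging
the two module structures. -/
def IsDoubleAntiAuto {K : Type v} [AddCommGroup K] (DK : DoubleModule R K) (θ : K → K) : Prop :=
  Function.Bijective θ ∧ (∀ k k' : K, θ (k + k') = θ k + θ k') ∧
  (∀ (k : K) (r : R), θ (DK.m0 k r) = DK.m1 (θ k) r) ∧
  (∀ (k : K) (r : R), θ (DK.m1 k r) = DK.m0 (θ k) r)

variable (R)

/-- A general bilinear form on a right `R`-module `M` (encoded as a module over `Rᵐᵒᵖ`)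
with values in a double `R`-module `(K, DK)`. -/
structure GBF (M : Type v) [AddCommGroup M] [Module Rᵐᵒᵖ M]
    (K : Type w) [AddCommGroup K] (DK : DoubleModule R K) where
  b : M → M → K
  add_left : ∀ x x' y : M, b (x + x') y = b x y + b x' y
  add_right : ∀ x y y' : M, b x (y + y') = b x y + b x y'
  smul_left : ∀ (x y : M) (r : R), b (op r • x) y = DK.m0 (b x y) r
  smul_right : ∀ (x y : M) (r : R), b x (op r • y) = DK.m1 (b x y) r

variable {R}

namespace GBF

variable {M : Type v} [AddCommGroup M] [Module Rᵐᵒᵖ M]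
  {K : Type w} [AddCommGroup K] {DK : DoubleModule R K}

/-- The right adjoint of `β` is injective. -/
def RightInjective (β : GBF R M K DK) : Prop :=
  ∀ x x' : M, (∀ y : M, β.b y x = β.b y x') → x = x'

/-- The right adjoint of `β` is bijective onto `Hom_R(M, K₀)`. -/
def RightRegular (β : GBF R M K DK) : Prop :=
  β.RightInjective ∧
  ∀ f : M → K, (∀ y y' : M, f (y + y') = f y + f y') →
    (∀ (y : M) (r : R), f (op r • y) = DK.m0 (f y) r) →
    ∃ x : M, ∀ y : M, f y = β.b y x

/-- The left adjoint of `β` is injective. -/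
def LeftInjective (β : GBF R M K DK) : Prop :=
  ∀ x x' : M, (∀ y : M, β.b x y = β.b x' y) → x = x'

/-- The left adjoint of `β` is bijective onto `Hom_R(M, K₁)`. -/
def LeftRegular (β : GBF R M K DK) : Prop :=
  β.LeftInjective ∧
  ∀ f : M → K, (∀ y y' : M, f (y + y') = f y + f y') →
    (∀ (y : M) (r : R), f (op r • y) = DK.m1 (f y) r) →
    ∃ x : M, ∀ y : M, f y = β.b x y

/-- `α` is an adjoint anti-endomorphism for `β`: `β(w x, y) = β(x, α(w) y)`. -/
def IsAdjoint (β : GBF R M K DK) (α : Module.End Rᵐᵒᵖ M → Module.End Rᵐᵒᵖ M) : Prop :=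
  ∀ (w : Module.End Rᵐᵒᵖ M) (x y : M), β.b (w x) y = β.b x (α w y)

/-- Similarity of general bilinear forms on the same module. -/
def Similar {K' : Type v'} [AddCommGroup K'] {DK' : DoubleModule R K'}
    (β : GBF R M K DK) (β' : GBF R M K' DK') : Prop :=
  ∃ f : K → K', IsDoubleIso DK DK' f ∧ ∀ x y : M, β'.b x y = f (β.b x y)

end GBF

section Kalpha

variable {M : Type v} [AddCommGroup M] [Module Rᵐᵒᵖ M]

/-- The subgroup of `M ⊗_ℤ M` generated by the elements `(w x) ⊗ y - x ⊗ (α w y)`. -/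
def kalphaRel (α : Module.End Rᵐᵒᵖ M → Module.End Rᵐᵒᵖ M) : Submodule ℤ (M ⊗[ℤ] M) :=
  Submodule.span ℤ
    {z | ∃ (w : Module.End Rᵐᵒᵖ M) (x y : M), z = (w x) ⊗ₜ[ℤ] y - x ⊗ₜ[ℤ] (α w y)}

/-- `K_α`, the quotient of `M ⊗_ℤ M` by the relations `(w x) ⊗ y = x ⊗ (α w y)`. -/
abbrev Kalpha (α : Module.End Rᵐᵒᵖ M → Module.End Rᵐᵒᵖ M) : Type _ :=
  (M ⊗[ℤ] M) ⧸ kalphaRel α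

/-- The map `x ⊗ y ↦ (x·r) ⊗ y` on `M ⊗_ℤ M`. -/
noncomputable def smulLeftMap (r : R) : (M ⊗[ℤ] M) →ₗ[ℤ] (M ⊗[ℤ] M) :=
  TensorProduct.map ((DistribMulAction.toAddMonoidHom M (op r : Rᵐᵒᵖ)).toIntLinearMap)
    LinearMap.id

/-- The map `x ⊗ y ↦ x ⊗ (y·r)` on `M ⊗_ℤ M`. -/
noncomputable def smulRightMap (r : R) : (M ⊗[ℤ] M) →ₗ[ℤ] (M ⊗[ℤ] M) :=
  TensorProduct.map LinearMap.id
    ((DistribMulAction.toAddMonoidHom M (op r : Rᵐᵒᵖ)).toIntLinearMap)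

theorem smulLeftMap_tmul (r : R) (x y : M) :
    smulLeftMap r (x ⊗ₜ[ℤ] y) = (op r • x) ⊗ₜ[ℤ] y := rfl

theorem smulRightMap_tmul (r : R) (x y : M) :
    smulRightMap r (x ⊗ₜ[ℤ] y) = x ⊗ₜ[ℤ] (op r • y) := rfl

theorem kalphaRel_le_left (α : Module.End Rᵐᵒᵖ M → Module.End Rᵐᵒᵖ M) (r : R) :
    kalphaRel α ≤ (kalphaRel α).comap (smulLeftMap (M := M) r) := by
  rw [kalphaRel, Submodule.span_le]
  rintro _ ⟨w, x, y, rfl⟩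
  rw [SetLike.mem_coe, Submodule.mem_comap, map_sub]
  have h1 : smulLeftMap (M := M) r ((w x) ⊗ₜ[ℤ] y) = (w (op r • x)) ⊗ₜ[ℤ] y := by
    simp [smulLeftMap_tmul, map_smul]
  have h2 : smulLeftMap (M := M) r (x ⊗ₜ[ℤ] (α w y)) = (op r • x) ⊗ₜ[ℤ] (α w y) := by
    simp [smulLeftMap_tmul]
  rw [h1, h2]
  exact Submodule.subset_span ⟨w, op r • x, y, rfl⟩

theorem kalphaRel_le_right (α : Module.End Rᵐᵒᵖ M → Module.End Rᵐᵒᵖ M) (r : R) :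
    kalphaRel α ≤ (kalphaRel α).comap (smulRightMap (M := M) r) := by
  rw [kalphaRel, Submodule.span_le]
  rintro _ ⟨w, x, y, rfl⟩
  rw [SetLike.mem_coe, Submodule.mem_comap, map_sub]
  have h1 : smulRightMap (M := M) r ((w x) ⊗ₜ[ℤ] y) = (w x) ⊗ₜ[ℤ] (op r • y) := by
    simp [smulRightMap_tmul]
  have h2 : smulRightMap (M := M) r (x ⊗ₜ[ℤ] (α w y)) = x ⊗ₜ[ℤ] (α w (op r • y)) := by
    simp [smulRightMap_tmul, map_smul]
  rw [h1, h2]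
  exact Submodule.subset_span ⟨w, x, op r • y, rfl⟩

/-- The `m0`-action on `K_α`. -/
noncomputable def kSmul0 (α : Module.End Rᵐᵒᵖ M → Module.End Rᵐᵒᵖ M) (r : R) :
    Kalpha α →ₗ[ℤ] Kalpha α :=
  Submodule.mapQ _ _ (smulLeftMap r) (kalphaRel_le_left α r)

/-- The `m1`-action on `K_α`. -/
noncomputable def kSmul1 (α : Module.End Rᵐᵒᵖ M → Module.End Rᵐᵒᵖ M) (r : R) :
    Kalpha α →ₗ[ℤ] Kalpha α :=
  Submodule.mapQ _ _ (smulRightMap r) (kalphaRel_le_right α r)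

theorem kSmul0_mk (α : Module.End Rᵐᵒᵖ M → Module.End Rᵐᵒᵖ M) (r : R) (t : M ⊗[ℤ] M) :
    kSmul0 α r (Submodule.Quotient.mk t) = Submodule.Quotient.mk (smulLeftMap r t) := rfl

theorem kSmul1_mk (α : Module.End Rᵐᵒᵖ M → Module.End Rᵐᵒᵖ M) (r : R) (t : M ⊗[ℤ] M) :
    kSmul1 α r (Submodule.Quotient.mk t) = Submodule.Quotient.mk (smulRightMap r t) := rfl

/-- The double `R`-module structure on `K_α`. -/
noncomputable def KalphaDM (α : Module.End Rᵐᵒᵖ M → Module.End Rᵐᵒᵖ M) :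
    DoubleModule R (Kalpha α) where
  m0 k r := kSmul0 α r k
  m1 k r := kSmul1 α r k
  m0_add_left k k' r := map_add _ k k'
  m0_add_right := by
    intro k r r'
    try dsimp only
    induction k using Submodule.Quotient.induction_on with
    | _ t =>
      rw [kSmul0_mk, kSmul0_mk, kSmul0_mk, ← Submodule.Quotient.mk_add]
      congr 1
      induction t with
      | zero => simp
      | tmul x y => simp [smulLeftMap_tmul, op_add, add_smul, TensorProduct.add_tmul]
      | add a b ha hb => rw [map_add, map_add, map_add, ha, hb]; abel
  m0_mul := by
    intro k r r'
    try dsimp only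
    induction k using Submodule.Quotient.induction_on with
    | _ t =>
      rw [kSmul0_mk, kSmul0_mk, kSmul0_mk]
      congr 1
      induction t with
      | zero => simp
      | tmul x y => simp [smulLeftMap_tmul, op_mul, mul_smul]
      | add a b ha hb => rw [map_add, map_add, map_add, ha, hb]
  m0_one := by
    intro k
    try dsimp only
    induction k using Submodule.Quotient.induction_on with
    | _ t =>
      rw [kSmul0_mk]
      congr 1
      induction t with
      | zero => simp
      | tmul x y => simp [smulLeftMap_tmul]
      | add a b ha hb => rw [map_add, ha, hb]
  m1_add_left k k' r := map_add _ k k'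
  m1_add_right := by
    intro k r r'
    try dsimp only
    induction k using Submodule.Quotient.induction_on with
    | _ t =>
      rw [kSmul1_mk, kSmul1_mk, kSmul1_mk, ← Submodule.Quotient.mk_add]
      congr 1
      induction t with
      | zero => simp
      | tmul x y => simp [smulRightMap_tmul, op_add, add_smul, TensorProduct.tmul_add]
      | add a b ha hb => rw [map_add, map_add, map_add, ha, hb]; abel
  m1_mul := by
    intro k r r'
    try dsimp only
    induction k using Submodule.Quotient.induction_on with
    | _ t =>
      rw [kSmul1_mk, kSmul1_mk, kSmul1_mk]
      congr 1
      induction t with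
      | zero => simp
      | tmul x y => simp [smulRightMap_tmul, op_mul, mul_smul]
      | add a b ha hb => rw [map_add, map_add, map_add, ha, hb]
  m1_one := by
    intro k
    try dsimp only
    induction k using Submodule.Quotient.induction_on with
    | _ t =>
      rw [kSmul1_mk]
      congr 1
      induction t with
      | zero => simp
      | tmul x y => simp [smulRightMap_tmul]
      | add a b ha hb => rw [map_add, ha, hb]
  comm := by
    intro k a c
    try dsimp only
    induction k using Submodule.Quotient.induction_on with
    | _ t =>
      rw [kSmul0_mk, kSmul1_mk, kSmul1_mk, kSmul0_mk]
      congr 1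
      induction t with
      | zero => simp
      | tmul x y => simp [smulLeftMap_tmul, smulRightMap_tmul]
      | add p q hp hq => rw [map_add, map_add, map_add, map_add, hp, hq]

/-- The universal general bilinear form `b_α : M × M → K_α`. -/
noncomputable def balpha (α : Module.End Rᵐᵒᵖ M → Module.End Rᵐᵒᵖ M) :
    GBF R M (Kalpha α) (KalphaDM α) where
  b x y := Submodule.Quotient.mk (x ⊗ₜ[ℤ] y)
  add_left x x' y := by
    try dsimp only
    rw [TensorProduct.add_tmul, Submodule.Quotient.mk_add]
  add_right x y y' := by
    try dsimp only
    rw [TensorProduct.tmul_add, Submodule.Quotient.mk_add]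
  smul_left x y r := by
    show _ = kSmul0 α r (Submodule.Quotient.mk (x ⊗ₜ[ℤ] y))
    rw [kSmul0_mk]
    congr 1
  smul_right x y r := by
    show _ = kSmul1 α r (Submodule.Quotient.mk (x ⊗ₜ[ℤ] y))
    rw [kSmul1_mk]
    congr 1

end Kalpha

end Core

section Solution

variable {R : Type u} [Ring R] {M : Type v} [AddCommGroup M] [Module Rᵐᵒᵖ M]

namespace Sol

theorem mk_rel (α : Module.End Rᵐᵒᵖ M → Module.End Rᵐᵒᵖ M)
    (w : Module.End Rᵐᵒᵖ M) (u v : M) :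
    (Submodule.Quotient.mk ((w u) ⊗ₜ[ℤ] v) : Kalpha α) =
      Submodule.Quotient.mk (u ⊗ₜ[ℤ] (α w v)) := by
  rw [Submodule.Quotient.eq]
  exact Submodule.subset_span ⟨w, u, v, rfl⟩

theorem m0_mk_tmul (α : Module.End Rᵐᵒᵖ M → Module.End Rᵐᵒᵖ M) (u v : M) (r : R) :
    (KalphaDM α).m0 (Submodule.Quotient.mk (u ⊗ₜ[ℤ] v)) r
      = Submodule.Quotient.mk ((op r • u) ⊗ₜ[ℤ] v) := by
  show kSmul0 α r _ = _
  rw [kSmul0_mk]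
  congr 1

/-- Bilinear lift out of `Kalpha α`. -/
noncomputable def kHom (α : Module.End Rᵐᵒᵖ M → Module.End Rᵐᵒᵖ M)
    {A : Type w} [AddCommGroup A] (B : M → M → A)
    (haddl : ∀ u u' v, B (u + u') v = B u v + B u' v)
    (haddr : ∀ u v v', B u (v + v') = B u v + B u v')
    (hbal : ∀ w u v, B (w u) v = B u (α w v)) : Kalpha α →ₗ[ℤ] A := by
  refine Submodule.liftQ _ (TensorProduct.lift
    ((AddMonoidHom.mk' (fun u => (AddMonoidHom.mk' (B u) (haddr u)).toIntLinearMap)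
      (fun u u' => by ext v; exact haddl u u' v)).toIntLinearMap)) ?_
  rw [kalphaRel, Submodule.span_le]
  rintro z ⟨w, u, v, rfl⟩
  simp only [SetLike.mem_coe, LinearMap.mem_ker, map_sub, TensorProduct.lift.tmul]
  refine LinearMap.mem_ker.mpr ((map_sub _ _ _).trans ?_)
  show B (w u) v - B u (α w v) = 0
  rw [hbal, sub_self]

theorem kHom_mk (α : Module.End Rᵐᵒᵖ M → Module.End Rᵐᵒᵖ M)
    {A : Type w} [AddCommGroup A] (B : M → M → A) (haddl) (haddr) (hbal) (u v : M) :
    kHom α B haddl haddr hbal (Submodule.Quotient.mk (u ⊗ₜ[ℤ] v)) = B u v := rfl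

/-- The rank-one endomorphism `m ↦ φ(m) • u`. -/
def eform (φ : M →ₗ[Rᵐᵒᵖ] Rᵐᵒᵖ) (u : M) : Module.End Rᵐᵒᵖ M where
  toFun m := φ m • u
  map_add' a b := by simp [add_smul]
  map_smul' a m := by simp [smul_eq_mul, mul_smul]

theorem eform_add (φ : M →ₗ[Rᵐᵒᵖ] Rᵐᵒᵖ) (u u' : M) :
    eform φ (u + u') = eform φ u + eform φ u' := by
  ext m; simp [eform, smul_add]

theorem eform_w (φ : M →ₗ[Rᵐᵒᵖ] Rᵐᵒᵖ) (w : Module.End Rᵐᵒᵖ M) (u : M) :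
    eform φ (w u) = w * eform φ u := by
  ext m; simp [eform, Module.End.mul_apply]

end Sol

end Solution

section SolProj

variable {R : Type u} [Ring R] {M : Type v} [AddCommGroup M] [Module Rᵐᵒᵖ M]

namespace Sol

theorem m0_eq (α : Module.End Rᵐᵒᵖ M → Module.End Rᵐᵒᵖ M) (k : Kalpha α) (r : R) :
    (KalphaDM α).m0 k r = kSmul0 α r k := rfl

theorem key_proj (α : Module.End Rᵐᵒᵖ M → Module.End Rᵐᵒᵖ M) (hα : IsAntiEndo α)
    [Module.Finite Rᵐᵒᵖ M] [Module.Projective Rᵐᵒᵖ M] :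
    (balpha (M := M) α).RightRegular := by
  classical
  obtain ⟨n, x, hx⟩ := Module.Finite.exists_fin (R := Rᵐᵒᵖ) (M := M)
  let π : (Fin n → Rᵐᵒᵖ) →ₗ[Rᵐᵒᵖ] M :=
    { toFun := fun c => ∑ i, c i • x i
      map_add' := fun c d => by simp [add_smul, Finset.sum_add_distrib]
      map_smul' := fun a c => by simp [smul_eq_mul, mul_smul, Finset.smul_sum] }
  have hπ : Function.Surjective π := by
    intro y
    have hy : y ∈ Submodule.span Rᵐᵒᵖ (Set.range x) := hx ▸ Submodule.mem_top
    obtain ⟨c, hc⟩ := (Submodule.mem_span_range_iff_exists_fun _).mp hy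
    exact ⟨c, hc⟩
  obtain ⟨s, hs⟩ := Module.projective_lifting_property π LinearMap.id hπ
  have hrep : ∀ y : M, ∑ i, s y i • x i = y := by
    intro y
    have h := DFunLike.congr_fun hs y
    simpa [π] using h
  let φ : Fin n → (M →ₗ[Rᵐᵒᵖ] Rᵐᵒᵖ) := fun i => (LinearMap.proj i).comp s
  have hφ : ∀ (i) (y : M), φ i y = s y i := fun i y => rfl
  -- the extraction maps
  let H : Fin n → (Kalpha α →ₗ[ℤ] M) := fun i =>
    kHom α (fun u v => α (eform (φ i) u) v)
      (fun u u' v => by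
        show α (eform (φ i) (u + u')) v = α (eform (φ i) u) v + α (eform (φ i) u') v
        rw [eform_add, hα.1]; rfl)
      (fun u v v' => (α (eform (φ i) u)).map_add v v')
      (fun w u v => by
        show α (eform (φ i) (w u)) v = α (eform (φ i) u) (α w v)
        rw [eform_w, hα.2.2, Module.End.mul_apply])
  have hH : ∀ z : M, ∑ i, H i (Submodule.Quotient.mk ((x i) ⊗ₜ[ℤ] z)) = z := by
    intro z
    have h1 : ∀ i, H i (Submodule.Quotient.mk ((x i) ⊗ₜ[ℤ] z))
        = α (eform (φ i) (x i)) z := fun i => rfl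
    rw [Finset.sum_congr rfl fun i _ => h1 i, ← LinearMap.sum_apply]
    have h2 : ∑ i, α (eform (φ i) (x i)) = α (∑ i, eform (φ i) (x i)) :=
      (map_sum (AddMonoidHom.mk' α hα.1) _ _).symm
    have h3 : ∑ i, eform (φ i) (x i) = 1 := by
      apply LinearMap.ext
      intro m
      rw [LinearMap.sum_apply]
      show (∑ i, φ i m • x i) = m
      exact hrep m
    rw [h2, h3, hα.2.1, Module.End.one_apply]
  constructor
  · intro a b hab
    have hab' : ∀ y : M, (Submodule.Quotient.mk (y ⊗ₜ[ℤ] a) : Kalpha α)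
        = Submodule.Quotient.mk (y ⊗ₜ[ℤ] b) := hab
    calc a = ∑ i, H i (Submodule.Quotient.mk ((x i) ⊗ₜ[ℤ] a)) := (hH a).symm
    _ = ∑ i, H i (Submodule.Quotient.mk ((x i) ⊗ₜ[ℤ] b)) := by
        exact Finset.sum_congr rfl fun i _ => congrArg (H i) (hab' (x i))
    _ = b := hH b
  · intro f haddf hsmf
    have hgen : ∀ i, ∀ t : M ⊗[ℤ] M, ∃ z : M, ∀ y : M,
        (KalphaDM α).m0 (Submodule.Quotient.mk t) (unop (s y i))
          = Submodule.Quotient.mk (y ⊗ₜ[ℤ] z) := by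
      intro i t
      induction t with
      | zero =>
        refine ⟨0, fun y => ?_⟩
        rw [m0_eq, Submodule.Quotient.mk_zero, map_zero, TensorProduct.tmul_zero,
          Submodule.Quotient.mk_zero]
      | tmul u v =>
        refine ⟨α (eform (φ i) u) v, fun y => ?_⟩
        rw [m0_mk_tmul]
        have h4 : op (unop (s y i)) • u = (eform (φ i) u) y := by
          rw [op_unop]; rfl
        rw [h4, mk_rel]
      | add t1 t2 h1 h2 =>
        obtain ⟨z1, hz1⟩ := h1
        obtain ⟨z2, hz2⟩ := h2
        refine ⟨z1 + z2, fun y => ?_⟩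
        rw [m0_eq, Submodule.Quotient.mk_add, map_add, ← m0_eq, ← m0_eq, hz1 y, hz2 y,
          TensorProduct.tmul_add, Submodule.Quotient.mk_add]
    have key : ∀ i, ∃ z : M, ∀ y : M,
        (KalphaDM α).m0 (f (x i)) (unop (s y i)) = Submodule.Quotient.mk (y ⊗ₜ[ℤ] z) := by
      intro i
      obtain ⟨t, ht⟩ := Submodule.Quotient.mk_surjective (kalphaRel α) (f (x i))
      rw [← ht]
      exact hgen i t
    choose z hz using key
    refine ⟨∑ i, z i, fun y => ?_⟩
    have h1 : f y = ∑ i, (KalphaDM α).m0 (f (x i)) (unop (s y i)) := by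
      conv_lhs => rw [← hrep y]
      rw [show f (∑ i, s y i • x i) = ∑ i, f (s y i • x i) from
        map_sum (AddMonoidHom.mk' f haddf) _ _]
      refine Finset.sum_congr rfl fun i _ => ?_
      rw [← hsmf (x i) (unop (s y i)), op_unop]
    rw [h1, Finset.sum_congr rfl fun i _ => hz i y]
    show _ = Submodule.Quotient.mk (y ⊗ₜ[ℤ] (∑ i, z i))
    rw [TensorProduct.tmul_sum]
    exact (map_sum (kalphaRel α).mkQ _ _).symm

end Sol

end SolProj

section SolSS

variable {R : Type u} [Ring R] {M : Type v} [AddCommGroup M] [Module Rᵐᵒᵖ M]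

namespace Sol

/-- Transitivity: maps into a fixed simple submodule factor through each other. -/
theorem end_factor [IsSemisimpleModule Rᵐᵒᵖ M] (S : Submodule Rᵐᵒᵖ M)
    (hS : IsSimpleModule Rᵐᵒᵖ S) (f g : Module.End Rᵐᵒᵖ M)
    (hf : LinearMap.range f ≤ S) (hg : LinearMap.range g ≤ S) (hf0 : f ≠ 0) :
    ∃ u : Module.End Rᵐᵒᵖ M, g = f ∘ₗ u := by
  have hatom : IsAtom S := isSimpleModule_iff_isAtom.mp hS
  have hrange : LinearMap.range f = S := by
    rcases eq_or_lt_of_le hf with h | h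
    · exact h
    · exact absurd (hatom.2 _ h) (by rwa [LinearMap.range_eq_bot])
  obtain ⟨C, hC⟩ := exists_isCompl (LinearMap.ker f)
  let e : C →ₗ[Rᵐᵒᵖ] S := LinearMap.codRestrict S (f ∘ₗ C.subtype) (fun c => hf ⟨c, rfl⟩)
  have he : ∀ c : C, (e c : M) = f c := fun c => rfl
  have hinj : Function.Injective e := by
    intro a b hab
    have hker : (a : M) - b ∈ LinearMap.ker f := by
      rw [LinearMap.mem_ker, map_sub]
      have hfab : f a = f b := by rw [← he a, ← he b, hab]
      rw [hfab, sub_self]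
    have hCm : (a : M) - b ∈ C := sub_mem a.2 b.2
    have hd := hC.disjoint
    rw [Submodule.disjoint_def] at hd
    exact Subtype.ext (sub_eq_zero.mp (hd _ hker hCm))
  have hsurj : Function.Surjective e := by
    rintro ⟨y, hy⟩
    rw [← hrange] at hy
    obtain ⟨m, hm⟩ := hy
    have hm' : m ∈ LinearMap.ker f ⊔ C := by rw [hC.sup_eq_top]; exact Submodule.mem_top
    obtain ⟨a, ha, b, hb, rfl⟩ := Submodule.mem_sup.mp hm'
    refine ⟨⟨b, hb⟩, Subtype.ext ?_⟩
    rw [he]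
    show f b = y
    rw [← hm, map_add, LinearMap.mem_ker.mp ha, zero_add]
  let eq := LinearEquiv.ofBijective e ⟨hinj, hsurj⟩
  refine ⟨C.subtype ∘ₗ eq.symm.toLinearMap ∘ₗ LinearMap.codRestrict S g (fun c => hg ⟨c, rfl⟩), ?_⟩
  apply LinearMap.ext
  intro m
  show g m = f ((eq.symm (LinearMap.codRestrict S g (fun c => hg ⟨c, rfl⟩) m) : C) : M)
  rw [← he]
  have : e (eq.symm (LinearMap.codRestrict S g (fun c => hg ⟨c, rfl⟩) m)) = LinearMap.codRestrict S g (fun c => hg ⟨c, rfl⟩) m :=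
    eq.apply_symm_apply _
  rw [this]
  rfl

/-- The right ideal of endomorphisms with range inside `S`. -/
def VS (S : Submodule Rᵐᵒᵖ M) :
    Submodule (Module.End Rᵐᵒᵖ M)ᵐᵒᵖ (Module.End Rᵐᵒᵖ M)ᵐᵒᵖ where
  carrier := {x | LinearMap.range x.unop ≤ S}
  add_mem' := by
    intro a b ha hb
    rintro _ ⟨m, rfl⟩
    show (a + b).unop m ∈ S
    rw [unop_add, LinearMap.add_apply]
    exact S.add_mem (ha ⟨m, rfl⟩) (hb ⟨m, rfl⟩)
  zero_mem' := by
    rintro _ ⟨m, rfl⟩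
    show (0 : (Module.End Rᵐᵒᵖ M)ᵐᵒᵖ).unop m ∈ S
    rw [unop_zero, LinearMap.zero_apply]
    exact S.zero_mem
  smul_mem' := by
    intro c x hx
    rintro _ ⟨m, rfl⟩
    show (c • x).unop m ∈ S
    rw [smul_eq_mul, unop_mul, Module.End.mul_apply]
    exact hx ⟨c.unop m, rfl⟩

theorem mem_VS {S : Submodule Rᵐᵒᵖ M} {x : (Module.End Rᵐᵒᵖ M)ᵐᵒᵖ} :
    x ∈ VS S ↔ LinearMap.range x.unop ≤ S := Iff.rfl

theorem vs_semisimple [IsSemisimpleModule Rᵐᵒᵖ M] (S : Submodule Rᵐᵒᵖ M)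
    (hS : IsSimpleModule Rᵐᵒᵖ S) :
    IsSemisimpleModule (Module.End Rᵐᵒᵖ M)ᵐᵒᵖ (VS (M := M) S) := by
  refine { toComplementedLattice := ⟨?_⟩ }
  intro p
  have hbt : p = ⊥ ∨ p = ⊤ := by
    rcases eq_or_ne p ⊥ with h | h
    · exact Or.inl h
    · refine Or.inr ?_
      obtain ⟨f, hfp, hf0⟩ := Submodule.exists_mem_ne_zero_of_ne_bot h
      rw [Submodule.eq_top_iff']
      intro g
      have hf0' : (f : (Module.End Rᵐᵒᵖ M)ᵐᵒᵖ).unop ≠ 0 := by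
        intro hc
        apply hf0
        apply Subtype.ext
        exact MulOpposite.unop_injective hc
      obtain ⟨u, hu⟩ := end_factor S hS (f : (Module.End Rᵐᵒᵖ M)ᵐᵒᵖ).unop
        (g : (Module.End Rᵐᵒᵖ M)ᵐᵒᵖ).unop f.2 g.2 hf0'
      have hgu : (g : ↥(VS (M := M) S)) = op u • f := by
        apply Subtype.ext
        apply MulOpposite.unop_injective
        show (g : (Module.End Rᵐᵒᵖ M)ᵐᵒᵖ).unop = (op u • (f : (Module.End Rᵐᵒᵖ M)ᵐᵒᵖ)).unop
        rw [hu]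
        show _ = (op u * (f : (Module.End Rᵐᵒᵖ M)ᵐᵒᵖ)).unop
        rw [unop_mul, unop_op]
        rfl
      rw [hgu]
      exact Submodule.smul_mem p _ hfp
  rcases hbt with rfl | rfl
  · exact ⟨⊤, isCompl_bot_top⟩
  · exact ⟨⊥, isCompl_top_bot⟩

theorem mem_iSup_of_range_le [IsSemisimpleModule Rᵐᵒᵖ M] (F : Finset (Submodule Rᵐᵒᵖ M)) :
    (∀ S ∈ F, IsSimpleModule Rᵐᵒᵖ S) → ∀ w : Module.End Rᵐᵒᵖ M,
      LinearMap.range w ≤ F.sup id →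
      op w ∈ ⨆ S : {S : Submodule Rᵐᵒᵖ M // IsSimpleModule Rᵐᵒᵖ S}, VS (M := M) S.1 := by
  classical
  induction F using Finset.induction_on with
  | empty =>
    intro _ w hw
    rw [Finset.sup_empty, le_bot_iff, LinearMap.range_eq_bot] at hw
    rw [hw, op_zero]
    exact zero_mem _
  | @insert S F hSF ih =>
    intro hF w hw
    have hSsimple : IsSimpleModule Rᵐᵒᵖ S := hF S (Finset.mem_insert_self S F)
    rw [Finset.sup_insert] at hw
    set q := F.sup id with hq
    obtain ⟨A, hA⟩ := exists_isCompl (q ⊓ S)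
    set C := A ⊓ S with hCdef
    have hCS : C ≤ S := inf_le_right
    have hqC_bot : q ⊓ C = ⊥ := by
      have h1 : q ⊓ C = (q ⊓ S) ⊓ A := by rw [hCdef, inf_comm A S, ← inf_assoc]
      rw [h1, hA.inf_eq_bot]
    have hS_eq : (q ⊓ S) ⊔ C = S := by
      have h2 := sup_inf_assoc_of_le (x := q ⊓ S) A (inf_le_right : q ⊓ S ≤ S)
      rw [hA.sup_eq_top, top_inf_eq] at h2
      rw [hCdef, ← h2]
    obtain ⟨E, hE⟩ := exists_isCompl (q ⊔ C)
    have hcompl : IsCompl C (q ⊔ E) := by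
      constructor
      · rw [disjoint_iff, eq_bot_iff]
        intro m hm
        obtain ⟨hmC, hmqE⟩ := Submodule.mem_inf.mp hm
        obtain ⟨a, ha, b, hb, hab⟩ := Submodule.mem_sup.mp hmqE
        have hbm : b ∈ (q ⊔ C) ⊓ E := by
          refine Submodule.mem_inf.mpr ⟨?_, hb⟩
          have : b = m - a := by rw [← hab]; abel
          rw [this]
          exact sub_mem (Submodule.mem_sup_right hmC) (Submodule.mem_sup_left ha)
        rw [hE.inf_eq_bot] at hbm
        have hmq : m ∈ q ⊓ C := by
          refine Submodule.mem_inf.mpr ⟨?_, hmC⟩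
          rw [← hab, hbm, add_zero]
          exact ha
        rw [hqC_bot] at hmq
        exact hmq
      · rw [codisjoint_iff]
        calc C ⊔ (q ⊔ E) = (q ⊔ C) ⊔ E := by rw [← sup_assoc, sup_comm C q]
        _ = ⊤ := hE.sup_eq_top
    let πC : Module.End Rᵐᵒᵖ M := C.subtype ∘ₗ Submodule.projectionOnto C (q ⊔ E) hcompl
    have hπC_range : LinearMap.range πC ≤ C := by
      rintro _ ⟨m, rfl⟩
      exact (Submodule.projectionOnto C (q ⊔ E) hcompl m).2
    have hπC_q : ∀ m ∈ q, πC m = 0 := by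
      intro m hm
      show (C.subtype) (Submodule.projectionOnto C (q ⊔ E) hcompl m) = 0
      rw [Submodule.projectionOnto_apply_of_mem_right hcompl (Submodule.mem_sup_left hm)]
      rfl
    have hπC_C : ∀ m (hm : m ∈ C), πC m = m := by
      intro m hm
      show (C.subtype) (Submodule.projectionOnto C (q ⊔ E) hcompl m) = m
      have := Submodule.linearProjOfIsCompl_apply_left hcompl ⟨m, hm⟩
      rw [this]
      rfl
    have hπC_S : ∀ m ∈ S, m - πC m ∈ q := by
      intro m hm
      rw [← hS_eq] at hm
      obtain ⟨a, ha, c, hc, rfl⟩ := Submodule.mem_sup.mp hm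
      have hπ : πC (a + c) = c := by
        rw [map_add, hπC_q a (Submodule.mem_inf.mp ha).1, hπC_C c hc, zero_add]
      rw [hπ]
      have : a + c - c = a := by abel
      rw [this]
      exact (Submodule.mem_inf.mp ha).1
    have hw2 : op (πC ∘ₗ w) ∈ VS (M := M) S := by
      rw [mem_VS]
      rintro _ ⟨m, rfl⟩
      exact hCS (hπC_range ⟨w m, rfl⟩)
    have hw1 : op (w - πC ∘ₗ w) ∈
        ⨆ S : {S : Submodule Rᵐᵒᵖ M // IsSimpleModule Rᵐᵒᵖ S}, VS (M := M) S.1 := by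
      apply ih (fun T hT => hF T (Finset.mem_insert_of_mem hT))
      rintro _ ⟨m, rfl⟩
      have hwm : w m ∈ id S ⊔ q := hw ⟨m, rfl⟩
      obtain ⟨a, ha, b, hb, hab⟩ := Submodule.mem_sup.mp hwm
      show w m - πC (w m) ∈ q
      rw [← hab, map_add, hπC_q b hb]
      have : a + b - (πC a + 0) = (a - πC a) + b := by abel
      rw [this]
      exact q.add_mem (hπC_S a ha) hb
    have hsplit : op w = op (w - πC ∘ₗ w) + op (πC ∘ₗ w) := by
      rw [← op_add]
      congr 1
      abel
    rw [hsplit]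
    refine add_mem hw1 (Submodule.mem_iSup_of_mem ⟨S, hSsimple⟩ hw2)

theorem one_mem_iSup [IsSemisimpleModule Rᵐᵒᵖ M] [Module.Finite Rᵐᵒᵖ M] :
    (1 : (Module.End Rᵐᵒᵖ M)ᵐᵒᵖ) ∈
      ⨆ S : {S : Submodule Rᵐᵒᵖ M // IsSimpleModule Rᵐᵒᵖ S}, VS (M := M) S.1 := by
  have htop : (⊤ : Submodule Rᵐᵒᵖ M) ≤ sSup {S : Submodule Rᵐᵒᵖ M | IsSimpleModule Rᵐᵒᵖ S} := by
    rw [IsSemisimpleModule.sSup_simples_eq_top]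
  have hcomp : IsCompactElement (⊤ : Submodule Rᵐᵒᵖ M) := by
    rw [← Submodule.fg_iff_compact]
    exact Module.finite_def.mp inferInstance
  obtain ⟨F, hFsub, hFtop⟩ := (CompleteLattice.isCompactElement_iff_exists_le_sSup_of_le_sSup _ _).mp hcomp _ htop
  have h1 : op (1 : Module.End Rᵐᵒᵖ M) ∈
      ⨆ S : {S : Submodule Rᵐᵒᵖ M // IsSimpleModule Rᵐᵒᵖ S}, VS (M := M) S.1 := by
    apply mem_iSup_of_range_le F (fun S hS => hFsub hS)
    intro m _
    exact hFtop Submodule.mem_top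
  exact h1

theorem W_op_semisimple [IsSemisimpleModule Rᵐᵒᵖ M] [Module.Finite Rᵐᵒᵖ M] :
    IsSemisimpleRing (Module.End Rᵐᵒᵖ M)ᵐᵒᵖ := by
  apply isSemisimpleModule_of_isSemisimpleModule_submodule'
    (p := fun S : {S : Submodule Rᵐᵒᵖ M // IsSimpleModule Rᵐᵒᵖ S} => VS (M := M) S.1)
  · exact fun S => vs_semisimple S.1 S.2
  · rw [Submodule.eq_top_iff']
    intro x
    have h1 := one_mem_iSup (R := R) (M := M)
    have := Submodule.smul_mem
      (⨆ S : {S : Submodule Rᵐᵒᵖ M // IsSimpleModule Rᵐᵒᵖ S}, VS (M := M) S.1) x h1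
    rwa [smul_eq_mul, mul_one] at this

/-- Every module over a semisimple ring is projective. -/
theorem projective_of_semisimple (T : Type w) [Ring T] [IsSemisimpleRing T]
    (P : Type v') [AddCommGroup P] [Module T P] : Module.Projective T P := by
  set L := Finsupp.linearCombination T (id : P → P) with hL
  obtain ⟨C, hC⟩ := exists_isCompl (LinearMap.ker L)
  let e : C →ₗ[T] P := L ∘ₗ C.subtype
  have hinj : Function.Injective e := by
    intro a b hab
    have hker : (a : P →₀ T) - b ∈ LinearMap.ker L := by
      rw [LinearMap.mem_ker, map_sub]
      show e a - e b = 0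
      rw [hab, sub_self]
    have hd := hC.disjoint
    rw [Submodule.disjoint_def] at hd
    exact Subtype.ext (sub_eq_zero.mp (hd _ hker (sub_mem a.2 b.2)))
  have hsurj : Function.Surjective e := by
    intro y
    obtain ⟨m, hm⟩ := Finsupp.linearCombination_id_surjective T P y
    have hm' : m ∈ LinearMap.ker L ⊔ C := by rw [hC.sup_eq_top]; exact Submodule.mem_top
    obtain ⟨a, ha, b, hb, rfl⟩ := Submodule.mem_sup.mp hm'
    refine ⟨⟨b, hb⟩, ?_⟩
    show L b = y
    rw [← hm, map_add, LinearMap.mem_ker.mp ha, zero_add]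
  let eqv := LinearEquiv.ofBijective e ⟨hinj, hsurj⟩
  apply Module.Projective.of_split (M := P →₀ T) (C.subtype ∘ₗ eqv.symm.toLinearMap) L
  apply LinearMap.ext
  intro p
  show L ((eqv.symm p : C) : P →₀ T) = p
  have : e (eqv.symm p) = p := eqv.apply_symm_apply p
  exact this

end Sol

end SolSS

section SolSS2

variable {R : Type u} [Ring R] {M : Type v} [AddCommGroup M] [Module Rᵐᵒᵖ M]

namespace Sol

theorem key_ss (α : Module.End Rᵐᵒᵖ M → Module.End Rᵐᵒᵖ M) (hα : IsAntiEndo α)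
    [Module.Finite Rᵐᵒᵖ M] [IsSemisimpleModule Rᵐᵒᵖ M] :
    (balpha (M := M) α).RightRegular := by
  classical
  haveI hWop : IsSemisimpleRing (Module.End Rᵐᵒᵖ M)ᵐᵒᵖ := W_op_semisimple
  -- the twisted module structure on `M` over `End(M)ᵐᵒᵖ`
  letI smulInst : SMul (Module.End Rᵐᵒᵖ M)ᵐᵒᵖ M := ⟨fun w z => α w.unop z⟩
  have hsmul_def : ∀ (w : Module.End Rᵐᵒᵖ M) (z : M), (op w) • z = α w z := fun w z => rfl
  letI modInst : Module (Module.End Rᵐᵒᵖ M)ᵐᵒᵖ M := Module.ofMinimalAxioms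
    (fun w z z' => map_add (α w.unop) z z')
    (fun w w' z => by
      show α (w + w').unop z = α w.unop z + α w'.unop z
      rw [unop_add, hα.1]
      rfl)
    (fun w w' z => by
      show α (w * w').unop z = α w.unop (α w'.unop z)
      rw [unop_mul, hα.2.2]
      rfl)
    (fun z => by
      show α (1 : (Module.End Rᵐᵒᵖ M)ᵐᵒᵖ).unop z = z
      rw [unop_one, hα.2.1]
      rfl)
  haveI hproj : Module.Projective (Module.End Rᵐᵒᵖ M)ᵐᵒᵖ M :=
    projective_of_semisimple _ M
  obtain ⟨s, hs⟩ := Module.projective_def'.mp hproj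
  have hrep : ∀ z : M,
      Finsupp.linearCombination (Module.End Rᵐᵒᵖ M)ᵐᵒᵖ (id : M → M) (s z) = z :=
    fun z => DFunLike.congr_fun hs z
  -- the coordinate extraction maps
  let G : M → (Kalpha α →ₗ[ℤ] M) := fun j =>
    kHom α (fun u v => (s v j).unop u)
      (fun u u' v => map_add ((s v j).unop) u u')
      (fun u v v' => by
        show (s (v + v') j).unop u = (s v j).unop u + (s v' j).unop u
        rw [map_add, Finsupp.add_apply, unop_add, LinearMap.add_apply])
      (fun w u v => by
        show (s v j).unop (w u) = (s (α w v) j).unop u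
        have h1 : α w v = (op w) • v := rfl
        rw [h1, map_smul, Finsupp.smul_apply, smul_eq_mul, unop_mul, unop_op,
          Module.End.mul_apply])
  have hG_mk : ∀ (j u v : M),
      G j (Submodule.Quotient.mk (u ⊗ₜ[ℤ] v)) = (s v j).unop u := fun j u v => rfl
  constructor
  · -- injectivity
    intro a b hab
    have h : ∀ (j y : M), (s a j).unop y = (s b j).unop y := by
      intro j y
      exact congrArg (G j) (hab y)
    have hsab : s a = s b := by
      apply Finsupp.ext
      intro j
      exact MulOpposite.unop_injective (LinearMap.ext fun y => h j y)
    rw [← hrep a, ← hrep b, hsab]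
  · -- surjectivity
    intro f haddf hsmf
    -- equivariance of G with respect to m0
    have hGm0 : ∀ (j : M) (k : Kalpha α) (r : R),
        G j ((KalphaDM α).m0 k r) = op r • (G j k) := by
      intro j k r
      induction k using Submodule.Quotient.induction_on with
      | _ t =>
        rw [m0_eq, kSmul0_mk]
        induction t with
        | zero => simp
        | tmul u v =>
          have h1 : smulLeftMap (M := M) r (u ⊗ₜ[ℤ] v) = (op r • u) ⊗ₜ[ℤ] v := by
            simp [smulLeftMap_tmul]
          rw [h1, hG_mk, hG_mk]
          exact map_smul ((s v j).unop) (op r) u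
        | add t1 t2 h1 h2 =>
          rw [map_add, Submodule.Quotient.mk_add, map_add, h1, h2, Submodule.Quotient.mk_add,
            map_add, smul_add]
    -- the endomorphisms y ↦ G j (f y)
    let g : M → Module.End Rᵐᵒᵖ M := fun j =>
      { toFun := fun y => G j (f y)
        map_add' := fun y y' => by
          show G j (f (y + y')) = G j (f y) + G j (f y')
          rw [haddf, map_add]
        map_smul' := fun r y => by
          show G j (f (r • y)) = r • G j (f y)
          have h1 : r • y = op (unop r) • y := by rw [op_unop]
          rw [h1, hsmf, hGm0, op_unop] }
    have hg_def : ∀ (j y : M), g j y = G j (f y) := fun j y => rfl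
    -- reconstruction of elements of Kalpha from coordinates
    have hrepK : ∀ k : Kalpha α, ∃ J0 : Finset M, ∀ J1 : Finset M, J0 ⊆ J1 →
        k = ∑ j ∈ J1, Submodule.Quotient.mk ((G j k) ⊗ₜ[ℤ] j) := by
      intro k
      induction k using Submodule.Quotient.induction_on with
      | _ t =>
        induction t with
        | zero =>
          refine ⟨∅, fun J1 _ => ?_⟩
          rw [Submodule.Quotient.mk_zero]
          symm
          refine Finset.sum_eq_zero fun j _ => ?_
          rw [map_zero, TensorProduct.zero_tmul, Submodule.Quotient.mk_zero]
        | tmul u v =>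
          refine ⟨(s v).support, fun J1 hJ1 => ?_⟩
          have hterm : ∀ j : M,
              (Submodule.Quotient.mk ((G j (Submodule.Quotient.mk (u ⊗ₜ[ℤ] v))) ⊗ₜ[ℤ] j)
                : Kalpha α)
              = Submodule.Quotient.mk (u ⊗ₜ[ℤ] ((s v j) • j)) := by
            intro j
            rw [hG_mk]
            have := mk_rel α ((s v j).unop) u j
            rw [this]
            rfl
          have hsum : ∑ j ∈ J1, (s v j) • j = v := by
            have h6 : ∑ j ∈ (s v).support, (s v) j • j = v := by
              conv_rhs => rw [← hrep v]
              rw [Finsupp.linearCombination_apply]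
              rfl
            have hzero : ∀ j ∈ J1, j ∉ (s v).support → (s v) j • j = 0 := fun j _ hj => by
              rw [Finsupp.notMem_support_iff.mp hj, zero_smul]
            exact ((Finset.sum_subset hJ1 hzero).symm).trans h6
          have h5 : u ⊗ₜ[ℤ] v = ∑ j ∈ J1, u ⊗ₜ[ℤ] ((s v j) • j) := by
            rw [← TensorProduct.tmul_sum, hsum]
          rw [Finset.sum_congr rfl fun j _ => hterm j, h5]
          exact map_sum ((kalphaRel α).mkQ) _ _
        | add t1 t2 h1 h2 =>
          obtain ⟨J1, hJ1⟩ := h1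
          obtain ⟨J2, hJ2⟩ := h2
          refine ⟨J1 ∪ J2, fun J hJ => ?_⟩
          have hterm : ∀ j : M,
              (Submodule.Quotient.mk ((G j (Submodule.Quotient.mk (t1 + t2))) ⊗ₜ[ℤ] j)
                : Kalpha α)
              = Submodule.Quotient.mk ((G j (Submodule.Quotient.mk t1)) ⊗ₜ[ℤ] j)
                + Submodule.Quotient.mk ((G j (Submodule.Quotient.mk t2)) ⊗ₜ[ℤ] j) := by
            intro j
            rw [Submodule.Quotient.mk_add, map_add, TensorProduct.add_tmul,
              Submodule.Quotient.mk_add]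
          calc (Submodule.Quotient.mk (t1 + t2) : Kalpha α)
              = Submodule.Quotient.mk t1 + Submodule.Quotient.mk t2 := by
                rw [Submodule.Quotient.mk_add]
          _ = (∑ j ∈ J, Submodule.Quotient.mk ((G j) (Submodule.Quotient.mk t1) ⊗ₜ[ℤ] j))
              + ∑ j ∈ J, Submodule.Quotient.mk ((G j) (Submodule.Quotient.mk t2) ⊗ₜ[ℤ] j) := by
                rw [← hJ1 J (Finset.subset_union_left.trans hJ),
                  ← hJ2 J (Finset.subset_union_right.trans hJ)]
          _ = ∑ j ∈ J, (Submodule.Quotient.mk ((G j) (Submodule.Quotient.mk t1) ⊗ₜ[ℤ] j)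
              + Submodule.Quotient.mk ((G j) (Submodule.Quotient.mk t2) ⊗ₜ[ℤ] j)) :=
                Finset.sum_add_distrib.symm
          _ = ∑ j ∈ J, Submodule.Quotient.mk ((G j) (Submodule.Quotient.mk (t1 + t2)) ⊗ₜ[ℤ] j) :=
                Finset.sum_congr rfl fun j _ => (hterm j).symm
    -- generators of M over Rᵐᵒᵖ
    obtain ⟨n, xg, hxg⟩ := Module.Finite.exists_fin (R := Rᵐᵒᵖ) (M := M)
    choose J0 hJ0 using fun i => hrepK (f (xg i))
    let J : Finset M := Finset.univ.sup J0
    let x0 : M := ∑ j ∈ J, α (g j) j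
    have hbx : ∀ y : M, (Submodule.Quotient.mk (y ⊗ₜ[ℤ] x0) : Kalpha α)
        = ∑ j ∈ J, Submodule.Quotient.mk ((g j y) ⊗ₜ[ℤ] j) := by
      intro y
      show (Submodule.Quotient.mk (y ⊗ₜ[ℤ] (∑ j ∈ J, α (g j) j)) : Kalpha α) = _
      calc (Submodule.Quotient.mk (y ⊗ₜ[ℤ] (∑ j ∈ J, α (g j) j)) : Kalpha α)
          = Submodule.Quotient.mk (∑ j ∈ J, y ⊗ₜ[ℤ] (α (g j) j)) := by
            rw [TensorProduct.tmul_sum]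
      _ = ∑ j ∈ J, (Submodule.Quotient.mk (y ⊗ₜ[ℤ] (α (g j) j)) : Kalpha α) :=
            map_sum ((kalphaRel α).mkQ) _ _
      _ = ∑ j ∈ J, Submodule.Quotient.mk ((g j y) ⊗ₜ[ℤ] j) :=
            Finset.sum_congr rfl fun j _ => (mk_rel α (g j) y j).symm
    have hgen : ∀ i, f (xg i) = ∑ j ∈ J, Submodule.Quotient.mk (((g j) (xg i)) ⊗ₜ[ℤ] j) :=
      fun i => hJ0 i J (Finset.le_sup (f := J0) (Finset.mem_univ i))
    have hfx : ∀ i, f (xg i) = Submodule.Quotient.mk ((xg i) ⊗ₜ[ℤ] x0) := by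
      intro i
      rw [hgen i]
      exact (hbx (xg i)).symm
    refine ⟨x0, fun y => ?_⟩
    have hy : y ∈ Submodule.span Rᵐᵒᵖ (Set.range xg) := hxg ▸ Submodule.mem_top
    obtain ⟨c, hc⟩ := (Submodule.mem_span_range_iff_exists_fun _).mp hy
    calc f y = f (∑ i, c i • xg i) := by rw [hc]
    _ = ∑ i, f (c i • xg i) := map_sum (AddMonoidHom.mk' f haddf) _ _
    _ = ∑ i, (KalphaDM α).m0 (f (xg i)) (unop (c i)) := by
        refine Finset.sum_congr rfl fun i _ => ?_
        rw [← hsmf (xg i) (unop (c i)), op_unop]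
    _ = ∑ i, (KalphaDM α).m0 (Submodule.Quotient.mk ((xg i) ⊗ₜ[ℤ] x0)) (unop (c i)) := by
        refine Finset.sum_congr rfl fun i _ => ?_
        rw [hfx i]
    _ = ∑ i, (Submodule.Quotient.mk (((c i) • xg i) ⊗ₜ[ℤ] x0) : Kalpha α) := by
        refine Finset.sum_congr rfl fun i _ => ?_
        rw [m0_mk_tmul, op_unop]
    _ = Submodule.Quotient.mk ((∑ i, c i • xg i) ⊗ₜ[ℤ] x0) := by
        rw [TensorProduct.sum_tmul]
        exact (map_sum ((kalphaRel α).mkQ) _ _).symm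
    _ = (balpha (M := M) α).b y x0 := by rw [hc]; rfl

end Sol

end SolSS2

/-- If `M` is finitely generated projective, or finitely generated
semisimple, then `b_α` is right regular for every anti-endomorphism `α` of `End_R(M)`. -/
theorem stmt_9 {R : Type u} [Ring R] {M : Type v} [AddCommGroup M] [Module Rᵐᵒᵖ M]
    (h : (Module.Finite Rᵐᵒᵖ M ∧ Module.Projective Rᵐᵒᵖ M) ∨
      (Module.Finite Rᵐᵒᵖ M ∧ IsSemisimpleModule Rᵐᵒᵖ M)) :
    ∀ α : Module.End Rᵐᵒᵖ M → Module.End Rᵐᵒᵖ M, IsAntiEndo α →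
      (balpha (M := M) α).RightRegular := by
  intro α hα
  rcases h with ⟨hf, hp⟩ | ⟨hf, hs⟩
  · exact Sol.key_proj α hα
  · exact Sol.key_ss α hα
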